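/- Nonnegativity of the conservation-law gap: under the hypotheses of Theorem 1 (x_i deterministic in (x_0, e^{i-1}); I(x_0; e_i | e^{i-1}, x^i) = 0; I(x_0; e_i | e^{i-1}, y^i) = 0 for all i), the feedback flow dominates the message flow: I(y^n → e^n) ≥ I(x^n → e^n), with equality if and only if I(y^n → e^n | x_0) = 0. -/

import Mathlib

open scoped BigOperators

/-- Distribution of a finite-valued random variable `X` under pmf `p`. -/
noncomputable def rvDist {Ω A : Type*} [Fintype Ω] [Fintype A] [DecidableEq A]
    (p : Ω → ℝ) (X : Ω → A) (a : A) : ℝ := ∑ ω, if X ω = a then p ω else 0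

/-- Shannon entropy `H(X)`. -/
noncomputable def ent {Ω A : Type*} [Fintype Ω] [Fintype A] [DecidableEq A]
    (p : Ω → ℝ) (X : Ω → A) : ℝ := ∑ a, Real.negMulLog (rvDist p X a)

/-- Conditional entropy `H(X | Y) = H(X,Y) - H(Y)`. -/
noncomputable def condEnt {Ω A B : Type*} [Fintype Ω] [Fintype A] [DecidableEq A]
    [Fintype B] [DecidableEq B] (p : Ω → ℝ) (X : Ω → A) (Y : Ω → B) : ℝ :=
  ent p (fun ω => (X ω, Y ω)) - ent p Y

/-- Mutual information `I(X;Y) = H(X)+H(Y)-H(X,Y)`. -/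
noncomputable def MI {Ω A B : Type*} [Fintype Ω] [Fintype A] [DecidableEq A]
    [Fintype B] [DecidableEq B] (p : Ω → ℝ) (X : Ω → A) (Y : Ω → B) : ℝ :=
  ent p X + ent p Y - ent p (fun ω => (X ω, Y ω))

/-- Conditional mutual information `I(X;Y|Z) = H(X|Z)+H(Y|Z)-H(X,Y|Z)`. -/
noncomputable def CMI {Ω A B C : Type*} [Fintype Ω] [Fintype A] [DecidableEq A]
    [Fintype B] [DecidableEq B] [Fintype C] [DecidableEq C]
    (p : Ω → ℝ) (X : Ω → A) (Y : Ω → B) (Z : Ω → C) : ℝ :=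
  condEnt p X Z + condEnt p Y Z - condEnt p (fun ω => (X ω, Y ω)) Z

/-- The prefix `x^i = (x_1, …, x_i)` of a random sequence, as a random variable. -/
def pre {Ω A : Type*} {n : ℕ} (x : Fin n → Ω → A) (i : ℕ) (h : i ≤ n) :
    Ω → (Fin i → A) := fun ω j => x (Fin.castLE h j) ω

/-- Directed information `I(x^n → y^n) = ∑_{i=1}^n I(x^i; y_i | y^{i-1})`. -/
noncomputable def DI {Ω A B : Type*} [Fintype Ω] [Fintype A] [DecidableEq A]
    [Fintype B] [DecidableEq B] {n : ℕ}
    (p : Ω → ℝ) (x : Fin n → Ω → A) (y : Fin n → Ω → B) : ℝ :=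
  ∑ i : Fin n, CMI p (pre x (i.1+1) i.isLt) (y i) (pre y i.1 i.isLt.le)


section Aux
variable {Ω : Type*} [Fintype Ω] (p : Ω → ℝ)

lemma rvDist_nonneg' {A : Type*} [Fintype A] [DecidableEq A] (hp : ∀ ω, 0 ≤ p ω)
    (X : Ω → A) (a : A) : 0 ≤ rvDist p X a :=
  Finset.sum_nonneg fun ω _ => by split <;> simp [hp ω]

lemma ent_comp_inj {A B : Type*} [Fintype A] [DecidableEq A] [Fintype B] [DecidableEq B]
    (f : A → B) (hf : Function.Injective f) (V : Ω → A) :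
    ent p (fun ω => f (V ω)) = ent p V := by
  have hz : ∀ b ∈ Finset.univ, b ∉ Finset.univ.image f →
      Real.negMulLog (rvDist p (fun ω => f (V ω)) b) = 0 := by
    intro b _ hb
    have h0 : rvDist p (fun ω => f (V ω)) b = 0 :=
      Finset.sum_eq_zero fun ω _ => by
        rw [if_neg]; intro h; exact hb (Finset.mem_image.2 ⟨V ω, Finset.mem_univ _, h⟩)
    rw [h0, Real.negMulLog_zero]
  rw [ent, ent, ← Finset.sum_subset (Finset.subset_univ (Finset.univ.image f)) hz,
      Finset.sum_image (fun a _ a' _ h => hf h)]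
  refine Finset.sum_congr rfl fun a _ => ?_
  congr 1
  exact Finset.sum_congr rfl fun ω _ => by simp [hf.eq_iff]

lemma rvDist_marg1 {A B C : Type*} [Fintype A] [DecidableEq A] [Fintype B] [DecidableEq B]
    [Fintype C] [DecidableEq C] (X : Ω → A) (Y : Ω → B) (Z : Ω → C) (a : A) (c : C) :
    rvDist p (fun ω => (X ω, Z ω)) (a, c)
      = ∑ b, rvDist p (fun ω => (X ω, Y ω, Z ω)) (a, b, c) := by
  unfold rvDist
  rw [Finset.sum_comm]
  refine Finset.sum_congr rfl fun ω _ => ?_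
  by_cases h1 : X ω = a <;> by_cases h3 : Z ω = c <;>
    simp [Prod.ext_iff, h1, h3, ite_and, Finset.sum_ite_eq, Finset.sum_ite_eq']

lemma rvDist_marg2 {A B C : Type*} [Fintype A] [DecidableEq A] [Fintype B] [DecidableEq B]
    [Fintype C] [DecidableEq C] (X : Ω → A) (Y : Ω → B) (Z : Ω → C) (b : B) (c : C) :
    rvDist p (fun ω => (Y ω, Z ω)) (b, c)
      = ∑ a, rvDist p (fun ω => (X ω, Y ω, Z ω)) (a, b, c) := by
  unfold rvDist
  rw [Finset.sum_comm]
  refine Finset.sum_congr rfl fun ω _ => ?_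
  by_cases h2 : Y ω = b <;> by_cases h3 : Z ω = c <;>
    simp [Prod.ext_iff, h2, h3, ite_and, Finset.sum_ite_eq, Finset.sum_ite_eq']

lemma rvDist_marg3 {A B C : Type*} [Fintype A] [DecidableEq A] [Fintype B] [DecidableEq B]
    [Fintype C] [DecidableEq C] (X : Ω → A) (Y : Ω → B) (Z : Ω → C) (c : C) :
    rvDist p Z c = ∑ a, ∑ b, rvDist p (fun ω => (X ω, Y ω, Z ω)) (a, b, c) := by
  unfold rvDist
  have h1 : ∀ a : A, (∑ b, ∑ ω, (if (X ω, Y ω, Z ω) = (a, b, c) then p ω else 0))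
      = ∑ ω, ∑ b, (if (X ω, Y ω, Z ω) = (a, b, c) then p ω else 0) := fun a => Finset.sum_comm
  simp only [h1]
  rw [Finset.sum_comm]
  refine Finset.sum_congr rfl fun ω _ => ?_
  by_cases h3 : Z ω = c <;>
    simp [Prod.ext_iff, h3, ite_and, Finset.sum_ite_eq, Finset.sum_ite_eq']

lemma submod {A B C : Type*} [Fintype A] [Fintype B] [Fintype C]
    (q : A → B → C → ℝ) (hq : ∀ a b c, 0 ≤ q a b c) :
    (∑ c, Real.negMulLog (∑ a, ∑ b, q a b c)) + (∑ a, ∑ b, ∑ c, Real.negMulLog (q a b c))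
      ≤ (∑ a, ∑ c, Real.negMulLog (∑ b, q a b c))
        + (∑ b, ∑ c, Real.negMulLog (∑ a, q a b c)) := by
  classical
  set q13 : A → C → ℝ := fun a c => ∑ b, q a b c with hq13
  set q23 : B → C → ℝ := fun b c => ∑ a, q a b c with hq23
  set q3 : C → ℝ := fun c => ∑ a, ∑ b, q a b c with hq3
  have h13n : ∀ a c, 0 ≤ q13 a c := fun a c => Finset.sum_nonneg fun b _ => hq a b c
  have h23n : ∀ b c, 0 ≤ q23 b c := fun b c => Finset.sum_nonneg fun a _ => hq a b c
  have h3n : ∀ c, 0 ≤ q3 c := fun c =>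
    Finset.sum_nonneg fun a _ => Finset.sum_nonneg fun b _ => hq a b c
  have hle13 : ∀ a b c, q a b c ≤ q13 a c := fun a b c =>
    Finset.single_le_sum (fun b' _ => hq a b' c) (Finset.mem_univ b)
  have hle23 : ∀ a b c, q a b c ≤ q23 b c := fun a b c =>
    Finset.single_le_sum (fun a' _ => hq a' b c) (Finset.mem_univ a)
  have hle3 : ∀ a c, q13 a c ≤ q3 c := fun a c =>
    Finset.single_le_sum (f := fun a' => ∑ b, q a' b c)
      (fun a' _ => Finset.sum_nonneg fun b _ => hq a' b c) (Finset.mem_univ a)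
  have h3comm : ∀ c, q3 c = ∑ b, q23 b c := fun c => Finset.sum_comm
  -- key pointwise inequality
  have key : ∀ a b c,
      q a b c * Real.log (q13 a c) + q a b c * Real.log (q23 b c)
        - q a b c * Real.log (q3 c) - q a b c * Real.log (q a b c)
      ≤ q13 a c * q23 b c / q3 c - q a b c := by
    intro a b c
    rcases eq_or_lt_of_le (hq a b c) with h0 | hpos
    · have h0' : q a b c = 0 := h0.symm
      rw [h0']
      have : 0 ≤ q13 a c * q23 b c / q3 c := div_nonneg (mul_nonneg (h13n a c) (h23n b c)) (h3n c)
      simpa using this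
    · have h13 : 0 < q13 a c := lt_of_lt_of_le hpos (hle13 a b c)
      have h23 : 0 < q23 b c := lt_of_lt_of_le hpos (hle23 a b c)
      have h3 : 0 < q3 c := lt_of_lt_of_le h13 (hle3 a c)
      have hβ : 0 < q13 a c * q23 b c / q3 c := div_pos (mul_pos h13 h23) h3
      have hlog := Real.one_sub_inv_le_log_of_pos (div_pos hpos hβ)
      rw [Real.log_div hpos.ne' hβ.ne'] at hlog
      have hβlog : Real.log (q13 a c * q23 b c / q3 c)
          = Real.log (q13 a c) + Real.log (q23 b c) - Real.log (q3 c) := by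
        rw [Real.log_div (mul_pos h13 h23).ne' h3.ne', Real.log_mul h13.ne' h23.ne']
      rw [hβlog, inv_div] at hlog
      have hmul := mul_le_mul_of_nonneg_left hlog hpos.le
      have e1 : q a b c * (q13 a c * q23 b c / q3 c / q a b c)
          = q13 a c * q23 b c / q3 c := by
        rw [mul_comm, div_mul_cancel₀ _ hpos.ne']
      nlinarith [hmul, e1]
  have sumbound : (∑ a, ∑ b, ∑ c,
        (q a b c * Real.log (q13 a c) + q a b c * Real.log (q23 b c)
          - q a b c * Real.log (q3 c) - q a b c * Real.log (q a b c)))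
      ≤ ∑ a, ∑ b, ∑ c, (q13 a c * q23 b c / q3 c - q a b c) :=
    Finset.sum_le_sum fun a _ => Finset.sum_le_sum fun b _ =>
      Finset.sum_le_sum fun c _ => key a b c
  have rhs0 : (∑ a, ∑ b, ∑ c, (q13 a c * q23 b c / q3 c - q a b c)) = 0 := by
    simp only [Finset.sum_sub_distrib]
    have e1 : ∀ a : A, (∑ b, ∑ c, q13 a c * q23 b c / q3 c)
        = ∑ c, ∑ b, q13 a c * q23 b c / q3 c := fun a => Finset.sum_comm
    have e2 : ∀ a : A, (∑ b, ∑ c, q a b c) = ∑ c, ∑ b, q a b c := fun a => Finset.sum_comm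
    simp only [e1, e2]
    rw [Finset.sum_comm (f := fun a c => ∑ b, q13 a c * q23 b c / q3 c),
        Finset.sum_comm (f := fun a c => ∑ b, q a b c)]
    have e3 : ∀ c, (∑ a, ∑ b, q13 a c * q23 b c / q3 c) = q3 c := by
      intro c
      by_cases hc : q3 c = 0
      · have hz : ∀ a, q13 a c = 0 := fun a =>
          le_antisymm (hc ▸ hle3 a c) (h13n a c)
        simp [hz, hc]
      · have : (∑ a, ∑ b, q13 a c * q23 b c / q3 c)
            = (∑ a, q13 a c) * (∑ b, q23 b c) / q3 c := by
          rw [Finset.sum_mul]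
          rw [Finset.sum_div]
          refine Finset.sum_congr rfl fun a _ => ?_
          rw [Finset.mul_sum, Finset.sum_div]
        rw [this, ← h3comm c]
        have : (∑ a, q13 a c) = q3 c := rfl
        rw [this, mul_div_assoc, div_self hc, mul_one]
    simp only [e3]
    have : ∀ c, (∑ a : A, ∑ b : B, q a b c) = q3 c := fun c => rfl
    simp only [this]
    simp
  -- rewrite goal
  have key2 : ∀ (a : A) (c : C), Real.negMulLog (q13 a c)
      = -(∑ b, q a b c * Real.log (q13 a c)) := by
    intro a c
    rw [← Finset.sum_mul, Real.negMulLog, neg_mul]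
  have key3 : ∀ (b : B) (c : C), Real.negMulLog (q23 b c)
      = -(∑ a, q a b c * Real.log (q23 b c)) := by
    intro b c
    rw [← Finset.sum_mul, Real.negMulLog, neg_mul]
  have key4 : ∀ c : C, Real.negMulLog (q3 c)
      = -(∑ a, ∑ b, q a b c * Real.log (q3 c)) := by
    intro c
    have : (∑ a, ∑ b, q a b c * Real.log (q3 c)) = (∑ a, ∑ b, q a b c) * Real.log (q3 c) := by
      rw [Finset.sum_mul]
      exact Finset.sum_congr rfl fun a _ => by rw [Finset.sum_mul]
    rw [this, Real.negMulLog, neg_mul]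
  have key5 : ∀ a b c, Real.negMulLog (q a b c) = -(q a b c * Real.log (q a b c)) := by
    intro a b c; rw [Real.negMulLog, neg_mul]
  show (∑ c, Real.negMulLog (q3 c)) + (∑ a, ∑ b, ∑ c, Real.negMulLog (q a b c))
      ≤ (∑ a, ∑ c, Real.negMulLog (q13 a c)) + (∑ b, ∑ c, Real.negMulLog (q23 b c))
  simp only [key2, key3, key4, key5, Finset.sum_neg_distrib]
  -- now reorder triple sums
  have r13 : (∑ a, ∑ c, ∑ b, q a b c * Real.log (q13 a c))
      = ∑ a, ∑ b, ∑ c, q a b c * Real.log (q13 a c) :=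
    Finset.sum_congr rfl fun a _ => Finset.sum_comm
  have r23 : (∑ b, ∑ c, ∑ a, q a b c * Real.log (q23 b c))
      = ∑ a, ∑ b, ∑ c, q a b c * Real.log (q23 b c) := by
    have e : ∀ b : B, (∑ c, ∑ a, q a b c * Real.log (q23 b c))
        = ∑ a, ∑ c, q a b c * Real.log (q23 b c) := fun b => Finset.sum_comm
    simp only [e]
    rw [Finset.sum_comm (f := fun b a => ∑ c, q a b c * Real.log (q23 b c))]
  have r3 : (∑ c, ∑ a, ∑ b, q a b c * Real.log (q3 c))
      = ∑ a, ∑ b, ∑ c, q a b c * Real.log (q3 c) := by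
    rw [Finset.sum_comm (f := fun c a => ∑ b, q a b c * Real.log (q3 c))]
    exact Finset.sum_congr rfl fun a _ => Finset.sum_comm
  rw [r13, r23, r3]
  have split : (∑ a, ∑ b, ∑ c,
      (q a b c * Real.log (q13 a c) + q a b c * Real.log (q23 b c)
        - q a b c * Real.log (q3 c) - q a b c * Real.log (q a b c)))
      = (∑ a, ∑ b, ∑ c, q a b c * Real.log (q13 a c))
        + (∑ a, ∑ b, ∑ c, q a b c * Real.log (q23 b c))
        - (∑ a, ∑ b, ∑ c, q a b c * Real.log (q3 c))
        - (∑ a, ∑ b, ∑ c, q a b c * Real.log (q a b c)) := by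
    simp only [Finset.sum_add_distrib, Finset.sum_sub_distrib]
  linarith [sumbound, rhs0, split]

lemma CMI_nonneg {A B C : Type*} [Fintype A] [DecidableEq A] [Fintype B] [DecidableEq B]
    [Fintype C] [DecidableEq C] (hp : ∀ ω, 0 ≤ p ω) (X : Ω → A) (Y : Ω → B) (Z : Ω → C) :
    0 ≤ CMI p X Y Z := by
  have hq : ∀ a b c, 0 ≤ rvDist p (fun ω => (X ω, Y ω, Z ω)) (a, b, c) :=
    fun a b c => rvDist_nonneg' p hp (fun ω => (X ω, Y ω, Z ω)) (a, b, c)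
  have h := submod (fun a b c => rvDist p (fun ω => (X ω, Y ω, Z ω)) (a, b, c)) hq
  have eAC : ent p (fun ω => (X ω, Z ω))
      = ∑ a, ∑ c, Real.negMulLog (∑ b, rvDist p (fun ω => (X ω, Y ω, Z ω)) (a, b, c)) := by
    rw [ent, Fintype.sum_prod_type]
    exact Finset.sum_congr rfl fun a _ => Finset.sum_congr rfl fun c _ => by
      rw [rvDist_marg1 p X Y Z a c]
  have eBC : ent p (fun ω => (Y ω, Z ω))
      = ∑ b, ∑ c, Real.negMulLog (∑ a, rvDist p (fun ω => (X ω, Y ω, Z ω)) (a, b, c)) := by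
    rw [ent, Fintype.sum_prod_type]
    exact Finset.sum_congr rfl fun b _ => Finset.sum_congr rfl fun c _ => by
      rw [rvDist_marg2 p X Y Z b c]
  have eC : ent p Z
      = ∑ c, Real.negMulLog (∑ a, ∑ b, rvDist p (fun ω => (X ω, Y ω, Z ω)) (a, b, c)) := by
    rw [ent]
    exact Finset.sum_congr rfl fun c _ => by rw [rvDist_marg3 p X Y Z c]
  have eABC : ent p (fun ω => ((X ω, Y ω), Z ω))
      = ∑ a, ∑ b, ∑ c, Real.negMulLog (rvDist p (fun ω => (X ω, Y ω, Z ω)) (a, b, c)) := by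
    have h1 : ent p (fun ω => ((X ω, Y ω), Z ω)) = ent p (fun ω => (X ω, Y ω, Z ω)) :=
      ent_comp_inj p (fun t : A × B × C => ((t.1, t.2.1), t.2.2))
        (by intro t t' h; simp only [Prod.ext_iff] at h ⊢; tauto)
        (fun ω => (X ω, Y ω, Z ω))
    rw [h1, ent]
    simp only [Fintype.sum_prod_type]
  simp only [CMI, condEnt]
  rw [eAC, eBC, eC, eABC]
  linarith [h]

lemma condEnt_comp_left {A B C : Type*} [Fintype A] [DecidableEq A] [Fintype B] [DecidableEq B]
    [Fintype C] [DecidableEq C] (f : A → B) (hf : Function.Injective f)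
    (X : Ω → A) (Z : Ω → C) :
    condEnt p (fun ω => f (X ω)) Z = condEnt p X Z := by
  unfold condEnt
  have e1 : ent p (fun ω => (f (X ω), Z ω)) = ent p (fun ω => (X ω, Z ω)) :=
    ent_comp_inj p (fun t : A × C => (f t.1, t.2))
      (by intro t t' h; simp only [Prod.ext_iff] at h ⊢; exact ⟨hf h.1, h.2⟩)
      (fun ω => (X ω, Z ω))
  rw [e1]

lemma CMI_eq_condEnt_sub {A B C : Type*} [Fintype A] [DecidableEq A] [Fintype B] [DecidableEq B]
    [Fintype C] [DecidableEq C] (X : Ω → A) (V : Ω → B) (U : Ω → C) :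
    CMI p X V U = condEnt p X U - condEnt p X (fun ω => (V ω, U ω)) := by
  simp only [CMI, condEnt]
  have e1 : ent p (fun ω => (X ω, (V ω, U ω))) = ent p (fun ω => ((X ω, V ω), U ω)) :=
    (ent_comp_inj p (fun t : (A × B) × C => (t.1.1, (t.1.2, t.2)))
      (by intro t t' h; simp only [Prod.ext_iff] at h ⊢; tauto)
      (fun ω => ((X ω, V ω), U ω)))
  rw [e1]
  ring

lemma condEnt_nonneg {A C : Type*} [Fintype A] [DecidableEq A]
    [Fintype C] [DecidableEq C] (hp : ∀ ω, 0 ≤ p ω) (X : Ω → A) (W : Ω → C) :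
    0 ≤ condEnt p X W := by
  have h := CMI_nonneg p hp X X W
  have e : ent p (fun ω => ((X ω, X ω), W ω)) = ent p (fun ω => (X ω, W ω)) :=
    ent_comp_inj p (fun t : A × C => ((t.1, t.1), t.2))
      (by intro t t' h; simp only [Prod.ext_iff] at h ⊢; tauto)
      (fun ω => (X ω, W ω))
  simp only [CMI, condEnt] at h ⊢
  rw [e] at h
  linarith

lemma CMI_eq_zero_of_condEnt {A B C : Type*} [Fintype A] [DecidableEq A] [Fintype B]
    [DecidableEq B] [Fintype C] [DecidableEq C] (hp : ∀ ω, 0 ≤ p ω)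
    (X : Ω → A) (V : Ω → B) (U : Ω → C) (h : condEnt p X U = 0) :
    CMI p X V U = 0 := by
  have h1 := CMI_nonneg p hp X V U
  have h2 := CMI_eq_condEnt_sub p X V U
  have h3 := condEnt_nonneg p hp X (fun ω => (V ω, U ω))
  linarith

lemma condEnt_comp_le {A C D : Type*} [Fintype A] [DecidableEq A]
    [Fintype C] [DecidableEq C] [Fintype D] [DecidableEq D] (hp : ∀ ω, 0 ≤ p ω)
    (X : Ω → A) (W : Ω → C) (f : C → D) :
    condEnt p X W ≤ condEnt p X (fun ω => f (W ω)) := by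
  have h1 : condEnt p X W = condEnt p X (fun ω => (W ω, f (W ω))) := by
    unfold condEnt
    have e1 : ent p (fun ω => (X ω, (W ω, f (W ω)))) = ent p (fun ω => (X ω, W ω)) :=
      ent_comp_inj p (fun t : A × C => (t.1, (t.2, f t.2)))
        (by intro t t' h; simp only [Prod.ext_iff] at h ⊢; tauto)
        (fun ω => (X ω, W ω))
    have e2 : ent p (fun ω => (W ω, f (W ω))) = ent p W :=
      ent_comp_inj p (fun c => (c, f c))
        (by intro c c' h; simpa using congrArg Prod.fst h) W
    rw [e1, e2]
  have h2 := CMI_eq_condEnt_sub p X W (fun ω => f (W ω))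
  have h3 := CMI_nonneg p hp X W (fun ω => f (W ω))
  linarith

lemma condEnt_pair {A B C : Type*} [Fintype A] [DecidableEq A] [Fintype B] [DecidableEq B]
    [Fintype C] [DecidableEq C] (U : Ω → A) (V : Ω → B) (W : Ω → C) :
    condEnt p (fun ω => (U ω, V ω)) W
      = condEnt p U W + condEnt p V (fun ω => (W ω, U ω)) := by
  simp only [condEnt]
  have e1 : ent p (fun ω => (V ω, (W ω, U ω))) = ent p (fun ω => ((U ω, V ω), W ω)) :=
    ent_comp_inj p (fun t : (A × B) × C => (t.1.2, (t.2, t.1.1)))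
      (by intro t t' h; simp only [Prod.ext_iff] at h ⊢; tauto)
      (fun ω => ((U ω, V ω), W ω))
  have e2 : ent p (fun ω => (W ω, U ω)) = ent p (fun ω => (U ω, W ω)) :=
    ent_comp_inj p (fun t : A × C => (t.2, t.1))
      (by intro t t' h; simp only [Prod.ext_iff] at h ⊢; tauto)
      (fun ω => (U ω, W ω))
  rw [e1, e2]
  ring

lemma CMI_comp_left {A B C D : Type*} [Fintype A] [DecidableEq A] [Fintype B] [DecidableEq B]
    [Fintype C] [DecidableEq C] [Fintype D] [DecidableEq D]
    (f : A → D) (hf : Function.Injective f) (X : Ω → A) (V : Ω → B) (U : Ω → C) :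
    CMI p (fun ω => f (X ω)) V U = CMI p X V U := by
  simp only [CMI]
  rw [condEnt_comp_left p f hf X U]
  have e : condEnt p (fun ω => (f (X ω), V ω)) U = condEnt p (fun ω => (X ω, V ω)) U :=
    condEnt_comp_left p (fun t : A × B => (f t.1, t.2))
      (by intro t t' h; simp only [Prod.ext_iff] at h ⊢; exact ⟨hf h.1, h.2⟩)
      (fun ω => (X ω, V ω)) U
  rw [e]

lemma CMI_chain {A B C D : Type*} [Fintype A] [DecidableEq A] [Fintype B] [DecidableEq B]
    [Fintype C] [DecidableEq C] [Fintype D] [DecidableEq D]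
    (X : Ω → A) (Y : Ω → B) (E : Ω → D) (Z : Ω → C) :
    CMI p (fun ω => (X ω, Y ω)) E Z
      = CMI p X E Z + CMI p Y E (fun ω => (Z ω, X ω)) := by
  simp only [CMI, condEnt]
  have e1 : ent p (fun ω => (Y ω, (Z ω, X ω))) = ent p (fun ω => ((X ω, Y ω), Z ω)) :=
    ent_comp_inj p (fun t : (A × B) × C => (t.1.2, (t.2, t.1.1)))
      (by intro t t' h; simp only [Prod.ext_iff] at h ⊢; tauto)
      (fun ω => ((X ω, Y ω), Z ω))
  have e2 : ent p (fun ω => (E ω, (Z ω, X ω))) = ent p (fun ω => ((X ω, E ω), Z ω)) :=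
    ent_comp_inj p (fun t : (A × D) × C => (t.1.2, (t.2, t.1.1)))
      (by intro t t' h; simp only [Prod.ext_iff] at h ⊢; tauto)
      (fun ω => ((X ω, E ω), Z ω))
  have e3 : ent p (fun ω => ((Y ω, E ω), (Z ω, X ω)))
      = ent p (fun ω => (((X ω, Y ω), E ω), Z ω)) :=
    ent_comp_inj p (fun t : ((A × B) × D) × C => ((t.1.1.2, t.1.2), (t.2, t.1.1.1)))
      (by intro t t' h; simp only [Prod.ext_iff] at h ⊢; tauto)
      (fun ω => (((X ω, Y ω), E ω), Z ω))
  have e4 : ent p (fun ω => (Z ω, X ω)) = ent p (fun ω => (X ω, Z ω)) :=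
    ent_comp_inj p (fun t : A × C => (t.2, t.1))
      (by intro t t' h; simp only [Prod.ext_iff] at h ⊢; tauto)
      (fun ω => (X ω, Z ω))
  rw [e1, e2, e3, e4]
  ring


set_option maxHeartbeats 1000000 in
lemma det_prefix {Ω M A C : Type*} [Fintype Ω] [Fintype M] [DecidableEq M]
    [Fintype A] [DecidableEq A] [Fintype C] [DecidableEq C] {n : ℕ}
    (p : Ω → ℝ) (hp : ∀ ω, 0 ≤ p ω) (x0 : Ω → M) (x : Fin n → Ω → A) (e : Fin n → Ω → C)
    (hdet : ∀ i : Fin n, condEnt p (x i) (fun ω => (x0 ω, pre e i.1 i.isLt.le ω)) = 0)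
    (k : ℕ) (hk : k ≤ n) :
    ∀ L, L ≤ k + 1 → ∀ (hLn : L ≤ n),
      condEnt p (pre x L hLn) (fun ω => (pre e k hk ω, x0 ω)) = 0 := by
  intro L
  induction L with
  | zero =>
    intro _ hLn
    simp only [condEnt]
    have e1 : ent p (fun ω => (pre x 0 hLn ω, (pre e k hk ω, x0 ω)))
        = ent p (fun ω => (pre e k hk ω, x0 ω)) := by
      have heq : (fun ω => (pre x 0 hLn ω, (pre e k hk ω, x0 ω)))
          = fun ω => ((fun w : (Fin k → C) × M => ((fun j : Fin 0 => j.elim0 : Fin 0 → A), w))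
              ((pre e k hk ω, x0 ω))) := by
        funext ω
        simp only
        congr 1
        funext j
        exact j.elim0
      rw [heq]
      exact ent_comp_inj p (fun w : (Fin k → C) × M => ((fun j : Fin 0 => j.elim0), w))
        (by intro a b h; simpa using congrArg Prod.snd h) (fun ω => (pre e k hk ω, x0 ω))
    rw [e1]
    ring
  | succ L IH =>
    intro hLk hLn
    have hLk'' : L ≤ k := Nat.lt_succ_iff.mp hLk
    have hLn' : L ≤ n := Nat.le_of_succ_le hLn
    have hLltn : L < n := hLn
    have hsnoc : pre x (L+1) hLn
        = fun ω => Fin.snoc (pre x L hLn' ω) (x ⟨L, hLltn⟩ ω) := by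
      funext ω
      funext jj
      refine Fin.lastCases ?_ ?_ jj
      · rw [Fin.snoc_last]
        exact congrFun (congrArg x
          ((Fin.ext rfl) : Fin.castLE hLn (Fin.last L) = ⟨L, hLltn⟩)) ω
      · intro jj
        rw [Fin.snoc_castSucc]
        exact congrFun (congrArg x
          ((Fin.ext rfl) : Fin.castLE hLn jj.castSucc = Fin.castLE hLn' jj)) ω
    rw [hsnoc]
    have hsnocinj : Function.Injective
        (fun t : (Fin L → A) × A => (Fin.snoc t.1 t.2 : Fin (L+1) → A)) := by
      intro t t' h
      have ha : t.2 = t'.2 := by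
        have := congrFun h (Fin.last L)
        simpa [Fin.snoc_last] using this
      have hg : t.1 = t'.1 := by
        funext s
        have := congrFun h s.castSucc
        simpa [Fin.snoc_castSucc] using this
      exact Prod.ext hg ha
    have hcl : condEnt p (fun ω => (Fin.snoc (pre x L hLn' ω) (x ⟨L, hLltn⟩ ω) : Fin (L+1) → A))
          (fun ω => (pre e k hk ω, x0 ω))
        = condEnt p (fun ω => (pre x L hLn' ω, x ⟨L, hLltn⟩ ω))
          (fun ω => (pre e k hk ω, x0 ω)) := by
      have h := condEnt_comp_left p (fun t : (Fin L → A) × A => (Fin.snoc t.1 t.2 : Fin (L+1) → A)) hsnocinj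
        (fun ω => (pre x L hLn' ω, x ⟨L, hLltn⟩ ω)) (fun ω => (pre e k hk ω, x0 ω))
      exact h
    rw [hcl,
      condEnt_pair p (pre x L hLn') (x ⟨L, hLltn⟩) (fun ω => (pre e k hk ω, x0 ω)),
      IH hLk''.step hLn', zero_add]
    have hle := condEnt_comp_le p hp (x ⟨L, hLltn⟩)
      (fun ω => ((pre e k hk ω, x0 ω), pre x L hLn' ω))
      (fun t : ((Fin k → C) × M) × (Fin L → A) =>
        (t.1.2, fun s : Fin L => t.1.1 (Fin.castLE hLk'' s)))
    have heq : (fun ω => ((fun t : ((Fin k → C) × M) × (Fin L → A) =>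
          (t.1.2, fun s : Fin L => t.1.1 (Fin.castLE hLk'' s)))
            ((pre e k hk ω, x0 ω), pre x L hLn' ω)))
        = fun ω => (x0 ω, pre e L hLn' ω) := by
      funext ω
      simp only
      congr 1
    rw [heq] at hle
    refine le_antisymm (hle.trans ?_) (condEnt_nonneg p hp _ _)
    exact le_of_eq (hdet ⟨L, hLltn⟩)

end Aux

/-- nonnegativity of the conservation-law gap:
`I(y^n → e^n) ≥ I(x^n → e^n)`, with equality iff `I(y^n → e^n | x_0) = 0`. -/
theorem conservation_gap_nonneg {Ω M A B C : Type*} [Fintype Ω]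
    [Fintype M] [DecidableEq M] [Fintype A] [DecidableEq A]
    [Fintype B] [DecidableEq B] [Fintype C] [DecidableEq C] {n : ℕ} (p : Ω → ℝ)
    (hp : ∀ ω, 0 ≤ p ω) (hp1 : ∑ ω, p ω = 1)
    (x0 : Ω → M) (x : Fin n → Ω → A) (y : Fin n → Ω → B) (e : Fin n → Ω → C)
    (hdet : ∀ i : Fin n, condEnt p (x i) (fun ω => (x0 ω, pre e i.1 i.isLt.le ω)) = 0)
    (hmarkov : ∀ i : Fin n,
      CMI p x0 (e i) (fun ω => (pre e i.1 i.isLt.le ω, pre x (i.1+1) i.isLt ω)) = 0)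
    (hcausal : ∀ i : Fin n,
      CMI p x0 (e i) (fun ω => (pre e i.1 i.isLt.le ω, pre y (i.1+1) i.isLt ω)) = 0) :
    DI p y e ≥ DI p x e ∧
    (DI p y e = DI p x e ↔
      (∑ i : Fin n, CMI p (pre y (i.1+1) i.isLt) (e i)
        (fun ω => (pre e i.1 i.isLt.le ω, x0 ω))) = 0) := by
  have key : ∀ i : Fin n,
      CMI p (pre y (i.1+1) i.isLt) (e i) (pre e i.1 i.isLt.le)
        = CMI p (pre x (i.1+1) i.isLt) (e i) (pre e i.1 i.isLt.le)
          + CMI p (pre y (i.1+1) i.isLt) (e i)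
              (fun ω => (pre e i.1 i.isLt.le ω, x0 ω)) := by
    intro i
    have hXdet : condEnt p (pre x (i.1+1) i.isLt)
        (fun ω => (pre e i.1 i.isLt.le ω, x0 ω)) = 0 :=
      det_prefix p hp x0 x e hdet i.1 i.isLt.le (i.1+1) (le_refl _) i.isLt
    have hx0 : CMI p (pre x (i.1+1) i.isLt) (e i)
        (fun ω => (pre e i.1 i.isLt.le ω, x0 ω)) = 0 :=
      CMI_eq_zero_of_condEnt p hp _ _ _ hXdet
    have chA := CMI_chain p x0 (pre x (i.1+1) i.isLt) (e i) (pre e i.1 i.isLt.le)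
    have chB := CMI_chain p (pre x (i.1+1) i.isLt) x0 (e i) (pre e i.1 i.isLt.le)
    have hswapx : CMI p (fun ω => (x0 ω, pre x (i.1+1) i.isLt ω)) (e i) (pre e i.1 i.isLt.le)
        = CMI p (fun ω => (pre x (i.1+1) i.isLt ω, x0 ω)) (e i) (pre e i.1 i.isLt.le) :=
      CMI_comp_left p (fun t : (Fin (i.1+1) → A) × M => (t.2, t.1))
        (by intro t t' h; simp only [Prod.ext_iff] at h ⊢; tauto)
        (fun ω => (pre x (i.1+1) i.isLt ω, x0 ω)) (e i) (pre e i.1 i.isLt.le)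
    have chC := CMI_chain p x0 (pre y (i.1+1) i.isLt) (e i) (pre e i.1 i.isLt.le)
    have chD := CMI_chain p (pre y (i.1+1) i.isLt) x0 (e i) (pre e i.1 i.isLt.le)
    have hswapy : CMI p (fun ω => (x0 ω, pre y (i.1+1) i.isLt ω)) (e i) (pre e i.1 i.isLt.le)
        = CMI p (fun ω => (pre y (i.1+1) i.isLt ω, x0 ω)) (e i) (pre e i.1 i.isLt.le) :=
      CMI_comp_left p (fun t : (Fin (i.1+1) → B) × M => (t.2, t.1))
        (by intro t t' h; simp only [Prod.ext_iff] at h ⊢; tauto)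
        (fun ω => (pre y (i.1+1) i.isLt ω, x0 ω)) (e i) (pre e i.1 i.isLt.le)
    have hm := hmarkov i
    have hc := hcausal i
    linarith [chA, chB, chC, chD, hswapx, hswapy, hm, hc, hx0]
  have hsum : DI p y e = DI p x e + ∑ i : Fin n,
      CMI p (pre y (i.1+1) i.isLt) (e i) (fun ω => (pre e i.1 i.isLt.le ω, x0 ω)) := by
    unfold DI
    rw [← Finset.sum_add_distrib]
    exact Finset.sum_congr rfl fun i _ => key i
  have hgapnn : 0 ≤ ∑ i : Fin n,
      CMI p (pre y (i.1+1) i.isLt) (e i) (fun ω => (pre e i.1 i.isLt.le ω, x0 ω)) :=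
    Finset.sum_nonneg fun i _ => CMI_nonneg p hp _ _ _
  refine ⟨by linarith, ⟨fun h => by linarith, fun h => by linarith⟩⟩
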